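/- Let T_n be the sequence of polynomials defined by T_0(x) = x and T_n(x) = (1 - x²)·T_{n-1}'(x) for n ≥ 1. Then for every n ≥ 0, T_n(0) equals the n-th derivative of tanh evaluated at 0; in particular T_{2n}(0) = 0 for all n ≥ 1, and the integers |T_{2m-1}(0)| are the tangent numbers. -/

import Mathlib

open Polynomial Real

noncomputable def T : ℕ → Polynomial ℚ
  | 0 => Polynomial.X
  | n + 1 => (1 - Polynomial.X ^ 2) * Polynomial.derivative (T n)

lemma hasDerivAt_tanh' (x : ℝ) : HasDerivAt Real.tanh (1 - Real.tanh x ^ 2) x := by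
  have hc : Real.cosh x ≠ 0 := (Real.cosh_pos x).ne'
  have h := (Real.hasDerivAt_sinh x).div (Real.hasDerivAt_cosh x) hc
  have heq : (fun y => Real.sinh y / Real.cosh y) = Real.tanh := by
    funext y; rw [Real.tanh_eq_sinh_div_cosh]
  rw [show (Real.sinh / Real.cosh) = Real.tanh from heq] at h
  refine h.congr_deriv ?_; symm
  rw [Real.tanh_eq_sinh_div_cosh]
  have h1 : Real.cosh x ^ 2 - Real.sinh x ^ 2 = 1 := Real.cosh_sq_sub_sinh_sq x
  field_simp

lemma key (n : ℕ) (x : ℝ) :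
    iteratedDeriv n Real.tanh x = Polynomial.aeval (Real.tanh x) (T n) := by
  induction n generalizing x with
  | zero => simp [T]
  | succ n ih =>
    rw [iteratedDeriv_succ]
    have hfun : iteratedDeriv n Real.tanh = fun y => Polynomial.aeval (Real.tanh y) (T n) :=
      funext fun y => ih y
    rw [hfun]
    have hp : HasDerivAt (fun y : ℝ => Polynomial.aeval y (T n))
        (Polynomial.aeval (Real.tanh x) (Polynomial.derivative (T n))) (Real.tanh x) := by
      have := Polynomial.hasDerivAt ((T n).map (algebraMap ℚ ℝ)) (Real.tanh x)
      simpa [Polynomial.aeval_def, Polynomial.eval_map, Polynomial.derivative_map] using this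
    have h := hp.comp x (hasDerivAt_tanh' x)
    have h2 : HasDerivAt (fun y => Polynomial.aeval (Real.tanh y) (T n))
        (Polynomial.aeval (Real.tanh x) (Polynomial.derivative (T n)) * (1 - Real.tanh x ^ 2)) x := h
    rw [h2.deriv]
    simp [T]
    ring

lemma T_int (n : ℕ) : ∃ p : Polynomial ℤ, T n = p.map (Int.castRingHom ℚ) := by
  induction n with
  | zero => exact ⟨Polynomial.X, by simp [T]⟩
  | succ n ih =>
    obtain ⟨p, hp⟩ := ih
    refine ⟨(1 - Polynomial.X ^ 2) * Polynomial.derivative p, ?_⟩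
    simp [T, hp, Polynomial.derivative_map, Polynomial.Monic]

lemma T_parity (n : ℕ) : (T n).comp (-Polynomial.X) = (-1) ^ (n + 1) * T n := by
  induction n with
  | zero => simp [T]
  | succ n ih =>
    have hd : Polynomial.derivative ((T n).comp (-Polynomial.X)) =
        (-1) ^ (n + 1) * Polynomial.derivative (T n) := by
      rw [ih]
      have hc : ((-1 : Polynomial ℚ)) ^ (n + 1) = Polynomial.C ((-1 : ℚ) ^ (n + 1)) := by simp
      rw [hc, Polynomial.derivative_C_mul]
    have hd2 : Polynomial.derivative ((T n).comp (-Polynomial.X)) =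
        (Polynomial.derivative (T n)).comp (-Polynomial.X) * (-1) := by
      rw [Polynomial.derivative_comp]; simp [mul_comm]
    have : (Polynomial.derivative (T n)).comp (-Polynomial.X)
        = (-1) ^ (n + 2) * Polynomial.derivative (T n) := by
      have := hd2.symm.trans hd
      have h3 : (Polynomial.derivative (T n)).comp (-Polynomial.X)
          = -((-1) ^ (n + 1) * Polynomial.derivative (T n)) := by
        have := congrArg (· * (-1 : Polynomial ℚ)) this
        simpa [mul_assoc] using this
      rw [h3]; ring
    show ((1 - Polynomial.X ^ 2) * Polynomial.derivative (T n)).comp (-Polynomial.X) = _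
    rw [Polynomial.mul_comp, this]
    simp [T]
    ring

theorem T_at_zero_eq_iteratedDeriv_tanh :
    (∀ n : ℕ, (Polynomial.aeval (0 : ℝ) (T n)) = iteratedDeriv n Real.tanh 0) ∧
    (∀ n : ℕ, 1 ≤ n → (T (2 * n)).eval 0 = 0) ∧
    (∀ m : ℕ, 1 ≤ m → ∃ k : ℤ, (T (2 * m - 1)).eval 0 = (k : ℚ)) := by
  refine ⟨fun n => ?_, fun n hn => ?_, fun m hm => ?_⟩
  · rw [key n 0, Real.tanh_zero]
  · have := congrArg (Polynomial.eval (0 : ℚ)) (T_parity (2 * n))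
    simp [Polynomial.eval_comp, pow_succ, pow_mul] at this
    linarith
  · obtain ⟨p, hp⟩ := T_int (2 * m - 1)
    exact ⟨p.eval 0, by rw [hp]; simp⟩
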